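/- arXiv:2006.08030 — 2 statements merged into one kernel-verified Lean document; each statement's English description precedes it below -/
import Mathlib

section
/- Let ℓ = P a with P ∈ ℝ^{n×r} orthonormal columns, and let ℓ̂ = ℓ + e where e = −I_T (I_T' Ψ I_T)^{-1} I_T' Ψ ℓ with Ψ = I − P̂P̂'. If ‖I_T' P̂‖ ≤ δ < 1 and sinθ_max(P̂,P) ≤ Δ, then ‖e‖ ≤ Δ ‖a‖ / (1 − δ²). -/
open Matrix MeasureTheory

noncomputable def spNorm {m n : Type*} [Fintype m] [Fintype n] [DecidableEq n]
    (A : Matrix m n ℝ) : ℝ :=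
  ‖LinearMap.toContinuousLinearMap (Matrix.toEuclideanLin A)‖

noncomputable def vnorm {n : Type*} [Fintype n] (x : n → ℝ) : ℝ :=
  Real.sqrt (∑ i, x i ^ 2)

def selMat {n : ℕ} (T : Finset (Fin n)) : Matrix (Fin n) {i // i ∈ T} ℝ :=
  fun i j => if i = (j : Fin n) then 1 else 0

section lemmas

variable {m n : Type*} [Fintype m] [Fintype n]

lemma vnorm_nonneg (x : n → ℝ) : 0 ≤ vnorm x := Real.sqrt_nonneg _

lemma vnorm_eq_norm (x : n → ℝ) :
    vnorm x = ‖(WithLp.equiv 2 (n → ℝ)).symm x‖ := by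
  rw [EuclideanSpace.norm_eq, vnorm]
  congr 1
  refine Finset.sum_congr rfl fun i _ => ?_
  rw [Real.norm_eq_abs, sq_abs]
  rfl

lemma sq_vnorm (x : n → ℝ) : vnorm x ^ 2 = x ⬝ᵥ x := by
  rw [vnorm, Real.sq_sqrt (by positivity)]
  simp [dotProduct, sq]

lemma dot_le_vnorm_mul_vnorm (x y : n → ℝ) : x ⬝ᵥ y ≤ vnorm x * vnorm y := by
  have h := real_inner_le_norm ((WithLp.equiv 2 (n → ℝ)).symm x)
      ((WithLp.equiv 2 (n → ℝ)).symm y)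
  rw [← vnorm_eq_norm, ← vnorm_eq_norm] at h
  simpa [PiLp.inner_apply, RCLike.inner_apply, dotProduct, mul_comm] using h

lemma vnorm_mulVec_le [Fintype n] [DecidableEq n] (A : Matrix m n ℝ) (x : n → ℝ) :
    vnorm (A *ᵥ x) ≤ spNorm A * vnorm x := by
  rw [vnorm_eq_norm, vnorm_eq_norm]
  exact (LinearMap.toContinuousLinearMap (Matrix.toEuclideanLin A)).le_opNorm ((WithLp.equiv 2 (n → ℝ)).symm x)

lemma dot_mulVec_self (A : Matrix m n ℝ) (x : n → ℝ) :
    (A *ᵥ x) ⬝ᵥ (A *ᵥ x) = x ⬝ᵥ ((Aᵀ * A) *ᵥ x) := by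
  rw [dotProduct_mulVec, ← Matrix.mulVec_transpose, Matrix.mulVec_mulVec, dotProduct_comm]

lemma vnorm_mulVec_orth [DecidableEq n] {A : Matrix m n ℝ} (h : Aᵀ * A = 1) (x : n → ℝ) :
    vnorm (A *ᵥ x) = vnorm x := by
  have h1 : vnorm (A *ᵥ x) ^ 2 = vnorm x ^ 2 := by
    rw [sq_vnorm, sq_vnorm, dot_mulVec_self, h, Matrix.one_mulVec]
  have := vnorm_nonneg (A *ᵥ x); have := vnorm_nonneg x
  nlinarith

lemma vnorm_transpose_mulVec_le {δ : ℝ} (hδ0 : 0 ≤ δ) [DecidableEq n]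
    {B : Matrix m n ℝ} (hB : spNorm B ≤ δ) (x : m → ℝ) :
    vnorm (Bᵀ *ᵥ x) ≤ δ * vnorm x := by
  set t := vnorm (Bᵀ *ᵥ x) with ht
  have ht0 : 0 ≤ t := vnorm_nonneg _
  have h1 : t ^ 2 = x ⬝ᵥ (B *ᵥ (Bᵀ *ᵥ x)) := by
    rw [ht, sq_vnorm, dot_mulVec_self, Matrix.transpose_transpose, Matrix.mulVec_mulVec]
  have h2 : x ⬝ᵥ (B *ᵥ (Bᵀ *ᵥ x)) ≤ vnorm x * (δ * t) := by
    calc x ⬝ᵥ (B *ᵥ (Bᵀ *ᵥ x)) ≤ vnorm x * vnorm (B *ᵥ (Bᵀ *ᵥ x)) :=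
          dot_le_vnorm_mul_vnorm _ _
      _ ≤ vnorm x * (δ * t) := by
          have := vnorm_mulVec_le B (Bᵀ *ᵥ x)
          have hs : spNorm B * vnorm (Bᵀ *ᵥ x) ≤ δ * t :=
            mul_le_mul_of_nonneg_right hB ht0
          exact mul_le_mul_of_nonneg_left (this.trans hs) (vnorm_nonneg x)
  rcases eq_or_lt_of_le ht0 with h | h
  · nlinarith [vnorm_nonneg x]
  · nlinarith [vnorm_nonneg x]

end lemmas

section sel

variable {n : ℕ} (T : Finset (Fin n))

lemma selMat_orth : (selMat T)ᵀ * selMat T = 1 := by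
  ext j k
  simp only [Matrix.mul_apply, Matrix.transpose_apply, selMat]
  rcases eq_or_ne j k with h | h
  · subst h
    simp [Matrix.one_apply]
  · have hjk : (j : Fin n) ≠ (k : Fin n) := fun hc => h (Subtype.ext hc)
    rw [Finset.sum_eq_zero, Matrix.one_apply_ne h]
    intro i _
    rcases eq_or_ne i (j : Fin n) with h1 | h1
    · simp [h1, hjk]
    · simp [h1]

lemma selMat_transpose_mulVec (z : Fin n → ℝ) (j : {i // i ∈ T}) :
    ((selMat T)ᵀ *ᵥ z) j = z (j : Fin n) := by
  simp [Matrix.mulVec, dotProduct, selMat, Finset.sum_ite_eq]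

lemma vnorm_selMat_transpose_mulVec_le (z : Fin n → ℝ) :
    vnorm ((selMat T)ᵀ *ᵥ z) ≤ vnorm z := by
  rw [vnorm, vnorm]
  apply Real.sqrt_le_sqrt
  calc ∑ j : {i // i ∈ T}, ((selMat T)ᵀ *ᵥ z) j ^ 2
      = ∑ j : {i // i ∈ T}, z (j : Fin n) ^ 2 := by
        refine Finset.sum_congr rfl fun j _ => ?_
        rw [selMat_transpose_mulVec]
    _ = ∑ i ∈ T, z i ^ 2 := by rw [Finset.sum_coe_sort T (fun i => z i ^ 2)]
    _ ≤ ∑ i, z i ^ 2 :=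
        Finset.sum_le_sum_of_subset_of_nonneg (Finset.subset_univ T)
          (fun i _ _ => sq_nonneg _)

end sel

/-- Bound on the least-squares debiasing error vector. -/
theorem stmt4 (n r : ℕ) (δ Δ : ℝ) (hδ0 : 0 ≤ δ) (hδ : δ < 1)
    (P Phat : Matrix (Fin n) (Fin r) ℝ)
    (horthP : Pᵀ * P = 1) (horthPhat : Phatᵀ * Phat = 1)
    (T : Finset (Fin n)) (a : Fin r → ℝ)
    (hP : spNorm ((selMat T)ᵀ * Phat) ≤ δ)
    (hΔ : spNorm (((1 : Matrix (Fin n) (Fin n) ℝ) - Phat * Phatᵀ) * P) ≤ Δ) :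
    vnorm ((-(selMat T *
        ((selMat T)ᵀ * ((1 : Matrix (Fin n) (Fin n) ℝ) - Phat * Phatᵀ) * selMat T)⁻¹ *
        (selMat T)ᵀ * ((1 : Matrix (Fin n) (Fin n) ℝ) - Phat * Phatᵀ))).mulVec (P.mulVec a))
      ≤ Δ * vnorm a / (1 - δ ^ 2) := by
  set Ψ : Matrix (Fin n) (Fin n) ℝ := 1 - Phat * Phatᵀ with hΨ
  set S := selMat T with hS
  set B := Sᵀ * Phat with hB
  set M := Sᵀ * Ψ * S with hM
  have hδ2 : 0 < 1 - δ ^ 2 := by nlinarith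
  -- M = 1 - B * Bᵀ
  have hST : Sᵀ * S = 1 := selMat_orth T
  have hMeq : M = 1 - B * Bᵀ := by
    rw [hM, hB, hΨ, Matrix.transpose_mul, Matrix.transpose_transpose, Matrix.mul_sub,
      Matrix.mul_one, Matrix.sub_mul, hST]
    simp [Matrix.mul_assoc]
  -- lower bound on vnorm (M *ᵥ x)
  have hlow : ∀ x : {i // i ∈ T} → ℝ, (1 - δ ^ 2) * vnorm x ≤ vnorm (M *ᵥ x) := by
    intro x
    have hBx : vnorm (Bᵀ *ᵥ x) ≤ δ * vnorm x := vnorm_transpose_mulVec_le hδ0 hP x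
    have hdot : (1 - δ ^ 2) * vnorm x ^ 2 ≤ x ⬝ᵥ (M *ᵥ x) := by
      have h1 : x ⬝ᵥ (M *ᵥ x) = vnorm x ^ 2 - vnorm (Bᵀ *ᵥ x) ^ 2 := by
        rw [hMeq, Matrix.sub_mulVec, dotProduct_sub, Matrix.one_mulVec, ← sq_vnorm,
          sq_vnorm (Bᵀ *ᵥ x), dot_mulVec_self, Matrix.transpose_transpose]
      rw [h1]
      nlinarith [vnorm_nonneg x, vnorm_nonneg (Bᵀ *ᵥ x)]
    have hcs : x ⬝ᵥ (M *ᵥ x) ≤ vnorm x * vnorm (M *ᵥ x) := dot_le_vnorm_mul_vnorm _ _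
    rcases eq_or_lt_of_le (vnorm_nonneg x) with h | h
    · rw [← h]; simpa using vnorm_nonneg (M *ᵥ x)
    · have h2 := hdot.trans hcs
      nlinarith [h2, h]
  -- M is invertible
  have hMinj : Function.Injective (M.mulVec) := by
    intro x y hxy
    have h1 : M *ᵥ (x - y) = 0 := by rw [Matrix.mulVec_sub, hxy, sub_self]
    have h2 := hlow (x - y)
    rw [h1] at h2
    have h3 : vnorm (0 : {i // i ∈ T} → ℝ) = 0 := by simp [vnorm]
    rw [h3] at h2
    have h4 : vnorm (x - y) = 0 :=
      le_antisymm (by nlinarith [vnorm_nonneg (x - y)]) (vnorm_nonneg _)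
    have h5 : ∑ i, (x - y) i ^ 2 = 0 := by
      have h5' : (∑ i, (x - y) i ^ 2) ≤ 0 := Real.sqrt_eq_zero'.mp h4
      have h5'' : (0:ℝ) ≤ ∑ i, (x - y) i ^ 2 := by positivity
      linarith
    have h6 : x - y = 0 := by
      funext i
      have := (Finset.sum_eq_zero_iff_of_nonneg (fun i _ => sq_nonneg ((x-y) i))).mp h5 i
        (Finset.mem_univ i)
      exact pow_eq_zero_iff (by norm_num) |>.mp this
    exact sub_eq_zero.mp h6
  have hMunit : IsUnit M := Matrix.mulVec_injective_iff_isUnit.mp hMinj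
  have hMinv : M * M⁻¹ = 1 := Matrix.mul_nonsing_inv M ((Matrix.isUnit_iff_isUnit_det M).mp hMunit)
  -- bound for M⁻¹
  have hinv : ∀ y : {i // i ∈ T} → ℝ, vnorm (M⁻¹ *ᵥ y) ≤ vnorm y / (1 - δ ^ 2) := by
    intro y
    have h1 : M *ᵥ (M⁻¹ *ᵥ y) = y := by rw [Matrix.mulVec_mulVec, hMinv, Matrix.one_mulVec]
    have h2 := hlow (M⁻¹ *ᵥ y)
    rw [h1] at h2
    rw [le_div_iff₀ hδ2, mul_comm]
    exact h2
  -- assemble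
  have hneg : (-(S * M⁻¹ * Sᵀ * Ψ)) *ᵥ (P *ᵥ a) = -((S * M⁻¹ * Sᵀ * Ψ) *ᵥ (P *ᵥ a)) :=
    Matrix.neg_mulVec _ _
  have hvneg : ∀ v : Fin n → ℝ, vnorm (-v) = vnorm v := by
    intro v; rw [vnorm, vnorm]; congr 1; exact Finset.sum_congr rfl fun i _ => by simp
  have hdecomp : (S * M⁻¹ * Sᵀ * Ψ) *ᵥ (P *ᵥ a)
      = S *ᵥ (M⁻¹ *ᵥ (Sᵀ *ᵥ ((Ψ * P) *ᵥ a))) := by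
    rw [Matrix.mulVec_mulVec, Matrix.mulVec_mulVec, Matrix.mulVec_mulVec,
      Matrix.mulVec_mulVec, Matrix.mul_assoc (S * M⁻¹ * Sᵀ) Ψ P]
  rw [hneg, hvneg, hdecomp, vnorm_mulVec_orth (selMat_orth T)]
  calc vnorm (M⁻¹ *ᵥ (Sᵀ *ᵥ ((Ψ * P) *ᵥ a)))
      ≤ vnorm (Sᵀ *ᵥ ((Ψ * P) *ᵥ a)) / (1 - δ ^ 2) := hinv _
    _ ≤ vnorm ((Ψ * P) *ᵥ a) / (1 - δ ^ 2) := by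
        gcongr
        exact vnorm_selMat_transpose_mulVec_le T _
    _ ≤ Δ * vnorm a / (1 - δ ^ 2) := by
        gcongr (?_ : ℝ) / _
        calc vnorm ((Ψ * P) *ᵥ a) ≤ spNorm (Ψ * P) * vnorm a := vnorm_mulVec_le _ _
          _ ≤ Δ * vnorm a := mul_le_mul_of_nonneg_right hΔ (vnorm_nonneg a)
end

section
/- Let M_{s,t} := I_T (I_T'ΨI_T)^{-1} I_T' Ψ with Ψ = I − P̂P̂', and suppose ‖I_T'P̂‖ ≤ δ < 1 and sinθ_max(P̂,P) ≤ Δ. Then q := ‖M_{s,t} P‖ ≤ Δ/(1 − δ²). -/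
open Matrix MeasureTheory

open scoped Matrix.Norms.L2Operator

lemma spNorm_eq_l2 {m n : Type*} [Fintype m] [Fintype n] [DecidableEq n]
    (A : Matrix m n ℝ) : spNorm A = ‖A‖ := rfl

lemma selMat_transpose_mul_self {n : ℕ} (T : Finset (Fin n)) :
    (selMat T)ᵀ * selMat T = 1 := by
  ext j k
  simp only [Matrix.mul_apply, Matrix.transpose_apply, selMat, Matrix.one_apply,
    ite_mul, one_mul, zero_mul]
  rw [Finset.sum_ite_eq' Finset.univ (j : Fin n) (fun i => if i = (k : Fin n) then 1 else 0)]
  rw [if_pos (Finset.mem_univ _)]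
  by_cases h : j = k
  · subst h; simp
  · rw [if_neg h, if_neg (fun e => h (Subtype.ext e))]

lemma l2_norm_one_le (m : Type*) [Fintype m] [DecidableEq m] :
    ‖(1 : Matrix m m ℝ)‖ ≤ 1 := by
  rw [Matrix.cstar_norm_def, _root_.map_one]
  exact ContinuousLinearMap.norm_id_le

lemma l2_norm_transpose {m n : Type*} [Fintype m] [Fintype n] [DecidableEq m] [DecidableEq n]
    (A : Matrix m n ℝ) : ‖Aᵀ‖ = ‖A‖ := by
  rw [← Matrix.conjTranspose_eq_transpose_of_trivial, Matrix.l2_opNorm_conjTranspose]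

lemma l2_norm_selMat_le {n : ℕ} (T : Finset (Fin n)) : ‖selMat T‖ ≤ 1 := by
  have h := Matrix.l2_opNorm_conjTranspose_mul_self (selMat T)
  rw [Matrix.conjTranspose_eq_transpose_of_trivial, selMat_transpose_mul_self] at h
  have h1 := l2_norm_one_le {i // i ∈ T}
  nlinarith [norm_nonneg (selMat T)]

/-- Bound on the noise-dependency norm q of the sparse recovery error matrix. -/
theorem stmt13 (n r : ℕ) (δ Δ : ℝ) (hδ0 : 0 ≤ δ) (hδ : δ < 1)
    (P Phat : Matrix (Fin n) (Fin r) ℝ)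
    (horthP : Pᵀ * P = 1) (horthPhat : Phatᵀ * Phat = 1)
    (T : Finset (Fin n))
    (hP : spNorm ((selMat T)ᵀ * Phat) ≤ δ)
    (hΔ : spNorm (((1 : Matrix (Fin n) (Fin n) ℝ) - Phat * Phatᵀ) * P) ≤ Δ) :
    spNorm ((selMat T *
      ((selMat T)ᵀ * ((1 : Matrix (Fin n) (Fin n) ℝ) - Phat * Phatᵀ) * selMat T)⁻¹ *
      (selMat T)ᵀ * ((1 : Matrix (Fin n) (Fin n) ℝ) - Phat * Phatᵀ)) * P)
      ≤ Δ / (1 - δ ^ 2) := by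
  rw [spNorm_eq_l2] at hP hΔ ⊢
  set S := selMat T with hSdef
  set Ψ : Matrix (Fin n) (Fin n) ℝ := 1 - Phat * Phatᵀ with hΨdef
  set C : Matrix {i // i ∈ T} (Fin r) ℝ := Sᵀ * Phat with hCdef
  -- the middle block equals 1 - C * Cᵀ
  have hB : Sᵀ * Ψ * S = 1 - C * Cᵀ := by
    rw [hΨdef, Matrix.mul_sub, Matrix.mul_one, Matrix.sub_mul, selMat_transpose_mul_self,
      hCdef, Matrix.transpose_mul, Matrix.transpose_transpose]
    rw [Matrix.mul_assoc, Matrix.mul_assoc, Matrix.mul_assoc]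
  -- norm bounds for the pieces
  have hS1 : ‖S‖ ≤ 1 := l2_norm_selMat_le T
  have hST1 : ‖Sᵀ‖ ≤ 1 := by rw [l2_norm_transpose]; exact hS1
  have hCT : ‖Cᵀ‖ ≤ δ := by rw [l2_norm_transpose]; exact hP
  have hx : ‖C * Cᵀ‖ ≤ δ ^ 2 := by
    calc ‖C * Cᵀ‖ ≤ ‖C‖ * ‖Cᵀ‖ := Matrix.l2_opNorm_mul C Cᵀ
    _ ≤ δ ^ 2 := by nlinarith [norm_nonneg C, norm_nonneg Cᵀ]
  have hδ2 : δ ^ 2 < 1 := by nlinarith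
  have hxlt : ‖C * Cᵀ‖ < 1 := lt_of_le_of_lt hx hδ2
  set u : (Matrix {i // i ∈ T} {i // i ∈ T} ℝ)ˣ := Units.oneSub (C * Cᵀ) hxlt with hu
  have hBinv : (Sᵀ * Ψ * S)⁻¹ = (↑u⁻¹ : Matrix _ _ ℝ) := by
    rw [hB]
    exact Matrix.inv_eq_right_inv (u.mul_inv)
  have hinvnorm : ‖(↑u⁻¹ : Matrix {i // i ∈ T} {i // i ∈ T} ℝ)‖ ≤ (1 - δ ^ 2)⁻¹ := by
    have h1 := tsum_geometric_le_of_norm_lt_one (C * Cᵀ) hxlt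
    have h2 : ‖(1 : Matrix {i // i ∈ T} {i // i ∈ T} ℝ)‖ ≤ 1 := l2_norm_one_le _
    have h3 : (1 - ‖C * Cᵀ‖)⁻¹ ≤ (1 - δ ^ 2)⁻¹ := by
      apply inv_anti₀ (by linarith) (by linarith)
    calc ‖(↑u⁻¹ : Matrix {i // i ∈ T} {i // i ∈ T} ℝ)‖
        = ‖∑' m : ℕ, (C * Cᵀ) ^ m‖ := rfl
      _ ≤ ‖(1 : Matrix {i // i ∈ T} {i // i ∈ T} ℝ)‖ - 1 + (1 - ‖C * Cᵀ‖)⁻¹ := h1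
      _ ≤ (1 - δ ^ 2)⁻¹ := by linarith
  have hΔ0 : 0 ≤ Δ := le_trans (norm_nonneg _) hΔ
  have hrec : S * (Sᵀ * Ψ * S)⁻¹ * Sᵀ * Ψ * P =
      S * ((Sᵀ * Ψ * S)⁻¹ * (Sᵀ * (Ψ * P))) := by
    rw [Matrix.mul_assoc, Matrix.mul_assoc, Matrix.mul_assoc, Matrix.mul_assoc]
  rw [hrec, hBinv]
  set V : Matrix (Fin n) {i // i ∈ T} ℝ := S with hV
  generalize hgen : (↑u⁻¹ : Matrix {i // i ∈ T} {i // i ∈ T} ℝ) = W at hinvnorm ⊢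
  clear hgen hBinv hu hB
  have key : ‖S * (W * (Sᵀ * (Ψ * P)))‖ ≤
      1 * ((1 - δ ^ 2)⁻¹ * (1 * Δ)) := by
    have e1 : ‖Ψ * P‖ ≤ Δ := hΔ
    have e2 : ‖Sᵀ * (Ψ * P)‖ ≤ 1 * Δ :=
      le_trans (Matrix.l2_opNorm_mul _ _)
        (mul_le_mul hST1 e1 (norm_nonneg _) (by norm_num))
    have e3 : ‖W * (Sᵀ * (Ψ * P))‖ ≤ (1 - δ ^ 2)⁻¹ * (1 * Δ) :=
      le_trans (Matrix.l2_opNorm_mul _ _)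
        (mul_le_mul hinvnorm e2 (norm_nonneg _) (inv_nonneg.mpr (by linarith)))
    exact le_trans (Matrix.l2_opNorm_mul _ _)
      (mul_le_mul hS1 e3 (norm_nonneg _) (by norm_num))
  calc ‖S * (W * (Sᵀ * (Ψ * P)))‖
      ≤ 1 * ((1 - δ ^ 2)⁻¹ * (1 * Δ)) := key
    _ = Δ / (1 - δ ^ 2) := by rw [one_mul, one_mul, div_eq_inv_mul]
end
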